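/- For k ≥ 1, the PLRS generated by [1,...,1 (k ones), 0, 3] is complete. -/

import Mathlib

/-- A sequence of positive integers (indexed from 1) is complete if every positive
integer is a sum of distinct terms (each index used at most once). -/
def SeqComplete (a : ℕ → ℕ) : Prop :=
  ∀ N : ℕ, 0 < N → ∃ s : Finset ℕ, (∀ i ∈ s, 1 ≤ i) ∧ ∑ i ∈ s, a i = N

/-- `H` is the positive linear recurrence sequence (PLRS) with coefficients
`c 1, …, c L` (indexed from 1). -/
def IsPLRS (L : ℕ) (c : ℕ → ℕ) (H : ℕ → ℕ) : Prop :=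
  H 1 = 1 ∧
  (∀ n, 1 ≤ n → n < L → H (n + 1) = (∑ i ∈ Finset.Icc 1 n, c i * H (n + 1 - i)) + 1) ∧
  (∀ n, L ≤ n → H (n + 1) = ∑ i ∈ Finset.Icc 1 L, c i * H (n + 1 - i))

/-- Reflection of index in a sum over an interval. -/
lemma reflect_sum (H : ℕ → ℕ) (m a b : ℕ) (ha : 1 ≤ a) (hab : a ≤ b) (hbm : b ≤ m) :
    ∑ i ∈ Finset.Icc a b, H (m - i) = ∑ j ∈ Finset.Icc (m - b) (m - a), H j := by
  refine Finset.sum_nbij' (i := fun i => m - i) (j := fun j => m - j)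
    ?_ ?_ ?_ ?_ ?_ <;> intro x hx <;> simp only [Finset.mem_Icc] at hx ⊢
  · omega
  · omega
  · omega
  · omega

/-- Brown's criterion. -/
lemma brown_complete (a : ℕ → ℕ) (h1 : a 1 = 1)
    (hpos : ∀ n, 1 ≤ n → 1 ≤ a n)
    (hb : ∀ n, a (n + 1) ≤ 1 + ∑ i ∈ Finset.Icc 1 n, a i) :
    SeqComplete a := by
  have key : ∀ n N, 1 ≤ N → N ≤ ∑ i ∈ Finset.Icc 1 n, a i →
      ∃ s : Finset ℕ, s ⊆ Finset.Icc 1 n ∧ ∑ i ∈ s, a i = N := by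
    intro n
    induction n with
    | zero => intro N hN hle; simp at hle; omega
    | succ n ih =>
      intro N hN hle
      rw [Finset.sum_Icc_succ_top (by omega : 1 ≤ n + 1)] at hle
      by_cases hc : N ≤ ∑ i ∈ Finset.Icc 1 n, a i
      · obtain ⟨s, hs1, hs2⟩ := ih N hN hc
        exact ⟨s, hs1.trans (Finset.Icc_subset_Icc_right (by omega)), hs2⟩
      · push_neg at hc
        by_cases hz : N = a (n + 1)
        · refine ⟨{n + 1}, ?_, by simp [hz]⟩
          simp only [Finset.singleton_subset_iff, Finset.mem_Icc]; omega
        · have hblt : a (n + 1) ≤ N := by have := hb n; omega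
          obtain ⟨s, hs1, hs2⟩ := ih (N - a (n + 1)) (by omega) (by omega)
          have hnot : n + 1 ∉ s := by
            intro hmem; have := hs1 hmem
            simp only [Finset.mem_Icc] at this; omega
          refine ⟨insert (n + 1) s, ?_, ?_⟩
          · intro x hx
            rcases Finset.mem_insert.mp hx with h | h
            · simp only [Finset.mem_Icc, h]; omega
            · have := hs1 h; simp only [Finset.mem_Icc] at this ⊢; omega
          · rw [Finset.sum_insert hnot, hs2]; omega
  intro N hN
  have hle : N ≤ ∑ i ∈ Finset.Icc 1 N, a i := by
    calc N = ∑ _i ∈ Finset.Icc 1 N, 1 := by simp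
    _ ≤ _ := Finset.sum_le_sum (fun i hi => hpos i (Finset.mem_Icc.mp hi).1)
  obtain ⟨s, hs1, hs2⟩ := key N N hN hle
  exact ⟨s, fun i hi => (Finset.mem_Icc.mp (hs1 hi)).1, hs2⟩

theorem k_ones_zero_three_complete (k : ℕ) (hk : 1 ≤ k) (H : ℕ → ℕ)
    (h : IsPLRS (k + 2) (fun i => if i ≤ k then 1 else if i = k + 2 then 3 else 0) H) :
    SeqComplete H := by
  obtain ⟨h1, h2, h3⟩ := h
  -- Fact A : for 1 ≤ n ≤ k, H (n+1) = ∑_{i=1}^n H i + 1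
  have factA : ∀ n, 1 ≤ n → n ≤ k → H (n + 1) = (∑ i ∈ Finset.Icc 1 n, H i) + 1 := by
    intro n hn1 hnk
    rw [h2 n hn1 (by omega)]
    beta_reduce
    congr 1
    have e1 : (∑ i ∈ Finset.Icc 1 n,
        (if i ≤ k then 1 else if i = k + 2 then 3 else 0) * H (n + 1 - i))
        = ∑ i ∈ Finset.Icc 1 n, H (n + 1 - i) := by
      refine Finset.sum_congr rfl (fun i hi => ?_)
      simp only [Finset.mem_Icc] at hi
      rw [if_pos (by omega)]; ring
    rw [e1, reflect_sum H (n + 1) 1 n le_rfl hn1 (by omega)]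
    have e2 : n + 1 - n = 1 := by omega
    have e3 : n + 1 - 1 = n := by omega
    rw [e2, e3]
  -- Fact B : H (k+2) = ∑_{i=2}^{k+1} H i + 1
  have factB : H (k + 2) = (∑ i ∈ Finset.Icc 2 (k + 1), H i) + 1 := by
    have := h2 (k + 1) (by omega) (by omega)
    beta_reduce at this
    rw [Finset.sum_Icc_succ_top (by omega : 1 ≤ k + 1)] at this
    rw [if_neg (by omega), if_neg (by omega), zero_mul, add_zero] at this
    rw [show k + 1 + 1 = k + 2 from rfl] at this
    have e1 : (∑ i ∈ Finset.Icc 1 k,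
        (if i ≤ k then 1 else if i = k + 2 then 3 else 0) * H (k + 2 - i))
        = ∑ i ∈ Finset.Icc 1 k, H (k + 2 - i) := by
      refine Finset.sum_congr rfl (fun i hi => ?_)
      simp only [Finset.mem_Icc] at hi
      rw [if_pos (by omega)]; ring
    rw [e1, reflect_sum H (k + 2) 1 k le_rfl hk (by omega)] at this
    have e2 : k + 2 - k = 2 := by omega
    have e3 : k + 2 - 1 = k + 1 := by omega
    rw [e2, e3] at this
    exact this
  -- Fact C : for m ≥ 1, H (m+k+2) = ∑_{j=m+2}^{m+k+1} H j + 3 * H m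
  have factC : ∀ m, 1 ≤ m →
      H (m + k + 2) = (∑ j ∈ Finset.Icc (m + 2) (m + k + 1), H j) + 3 * H m := by
    intro m hm
    have := h3 (m + k + 1) (by omega)
    beta_reduce at this
    rw [show m + k + 1 + 1 = m + k + 2 from rfl] at this
    rw [Finset.sum_Icc_succ_top (by omega : 1 ≤ k + 2),
        Finset.sum_Icc_succ_top (by omega : 1 ≤ k + 1)] at this
    rw [if_neg (by omega : ¬ (k + 1 ≤ k)), if_neg (by omega : ¬ (k + 1 = k + 2)),
        zero_mul, add_zero, if_neg (by omega : ¬ (k + 2 ≤ k)), if_pos rfl] at this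
    have e0 : m + k + 2 - (k + 2) = m := by omega
    rw [e0] at this
    have e1 : (∑ i ∈ Finset.Icc 1 k,
        (if i ≤ k then 1 else if i = k + 2 then 3 else 0) * H (m + k + 2 - i))
        = ∑ i ∈ Finset.Icc 1 k, H (m + k + 2 - i) := by
      refine Finset.sum_congr rfl (fun i hi => ?_)
      simp only [Finset.mem_Icc] at hi
      rw [if_pos (by omega)]; ring
    rw [e1, reflect_sum H (m + k + 2) 1 k le_rfl hk (by omega)] at this
    have e2 : m + k + 2 - k = m + 2 := by omega
    have e3 : m + k + 2 - 1 = m + k + 1 := by omega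
    rw [e2, e3] at this
    exact this
  -- Monotonicity
  have hmono : ∀ m, 1 ≤ m → H m ≤ H (m + 1) := by
    intro m hm
    by_cases hmk : m ≤ k
    · rw [factA m hm hmk]
      have : H m ≤ ∑ i ∈ Finset.Icc 1 m, H i :=
        Finset.single_le_sum (f := H) (fun i _ => Nat.zero_le _)
          (by simp only [Finset.mem_Icc]; omega)
      omega
    · by_cases hm1 : m = k + 1
      · subst hm1
        rw [show k + 1 + 1 = k + 2 from rfl, factB]
        have : H (k + 1) ≤ ∑ i ∈ Finset.Icc 2 (k + 1), H i :=
          Finset.single_le_sum (f := H) (fun i _ => Nat.zero_le _)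
            (by simp only [Finset.mem_Icc]; omega)
        omega
      · obtain ⟨p, hp, rfl⟩ : ∃ p, 1 ≤ p ∧ m = p + k + 1 :=
          ⟨m - k - 1, by omega, by omega⟩
        rw [show p + k + 1 + 1 = p + k + 2 from rfl, factC p hp]
        have : H (p + k + 1) ≤ ∑ j ∈ Finset.Icc (p + 2) (p + k + 1), H j :=
          Finset.single_le_sum (f := H) (fun i _ => Nat.zero_le _)
            (by simp only [Finset.mem_Icc]; omega)
        omega
  -- Positivity
  have hpos : ∀ n, 1 ≤ n → 1 ≤ H n := by
    intro n hn
    induction n, hn using Nat.le_induction with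
    | base => omega
    | succ n hn ih => exact ih.trans (hmono n hn)
  -- Brown's condition
  have hB : ∀ n, H (n + 1) ≤ 1 + ∑ i ∈ Finset.Icc 1 n, H i := by
    intro n
    induction n using Nat.strong_induction_on with
    | _ n ih =>
      rcases Nat.eq_zero_or_pos n with h0 | hn1
      · subst h0; simp [h1]
      by_cases hnk : n ≤ k
      · rw [factA n hn1 hnk]; omega
      by_cases hn2 : n = k + 1
      · subst hn2
        rw [show k + 1 + 1 = k + 2 from rfl, factB]
        have : ∑ i ∈ Finset.Icc 2 (k + 1), H i ≤ ∑ i ∈ Finset.Icc 1 (k + 1), H i :=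
          Finset.sum_le_sum_of_subset (Finset.Icc_subset_Icc_left (by omega))
        omega
      · obtain ⟨p, rfl⟩ : ∃ p, n = p + 1 + k + 1 := ⟨n - k - 2, by omega⟩
        rw [show p + 1 + k + 1 + 1 = p + 1 + k + 2 from rfl, factC (p + 1) (by omega)]
        have hsplit : ∑ i ∈ Finset.Icc 1 (p + 1 + k + 1), H i =
            (∑ i ∈ Finset.Icc 1 (p + 2), H i)
              + ∑ i ∈ Finset.Icc (p + 3) (p + 1 + k + 1), H i := by
          have eIoc : ∀ a b : ℕ, Finset.Icc (a + 1) b = Finset.Ioc a b := by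
            intro a b; ext x; simp only [Finset.mem_Icc, Finset.mem_Ioc]; omega
          rw [show Finset.Icc 1 (p + 1 + k + 1) = Finset.Ioc 0 (p + 1 + k + 1) from eIoc 0 _,
              show Finset.Icc 1 (p + 2) = Finset.Ioc 0 (p + 2) from eIoc 0 _,
              show Finset.Icc (p + 3) (p + 1 + k + 1) = Finset.Ioc (p + 2) (p + 1 + k + 1) from
                eIoc (p + 2) _]
          exact (Finset.sum_Ioc_consecutive H (by omega : 0 ≤ p + 2)
            (by omega : p + 2 ≤ p + 1 + k + 1)).symm
        have hs2 : ∑ i ∈ Finset.Icc 1 (p + 2), H i =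
            (∑ i ∈ Finset.Icc 1 p, H i) + H (p + 1) + H (p + 2) := by
          rw [Finset.sum_Icc_succ_top (by omega : 1 ≤ p + 2),
              Finset.sum_Icc_succ_top (by omega : 1 ≤ p + 1)]
        have hIH : H (p + 1) ≤ 1 + ∑ i ∈ Finset.Icc 1 p, H i := ih p (by omega)
        have hm : H (p + 1) ≤ H (p + 2) := hmono (p + 1) (by omega)
        have hsub : Finset.Icc (p + 1 + 2) (p + 1 + k + 1) = Finset.Icc (p + 3) (p + 1 + k + 1) := by
          norm_num
        rw [hsub]
        omega
  exact brown_complete H h1 hpos hB
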